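/- Let p be a prime, d ≥ 1 an integer, and l a natural number with 0 ≤ l ≤ p^d − 1. Let γ ∈ ℤ_p be the unique p-adic integer satisfying (p^d − 1)·γ = −l (γ exists and is unique since p^d − 1 is a unit in ℤ_p). Then for every integer e ≥ 1, γ_0 + p·γ_1 + ⋯ + p^{ed−1}·γ_{ed−1} = l·(1 + p^d + p^{2d} + ⋯ + p^{(e−1)d}), where (γ_i) are the p-adic digits of γ. (Lemma 7.2.) -/
import Mathlib


/-- Lemma 7.2: if `(p^d - 1)·γ = -l` with `0 ≤ l ≤ p^d - 1`, then for every `e ≥ 1`,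
`γ_0 + p·γ_1 + ⋯ + p^{ed-1}·γ_{ed-1} = l·(1 + p^d + ⋯ + p^{(e-1)d})`, where `(γ_i)` are
the `p`-adic digits of `γ`. -/
theorem digits_of_neg_frac (p : ℕ) [hp : Fact p.Prime] (d : ℕ) (hd : 1 ≤ d)
    (l : ℕ) (hl : l ≤ p ^ d - 1)
    (γ : ℤ_[p]) (hγ : ((p : ℤ_[p]) ^ d - 1) * γ = -(l : ℤ_[p]))
    (dig : ℕ → ℕ) (hdig_lt : ∀ i, dig i < p)
    (hdig : ∀ n : ℕ, ((p : ℤ_[p]) ^ n) ∣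
      (γ - ∑ i ∈ Finset.range n, (dig i : ℤ_[p]) * (p : ℤ_[p]) ^ i)) :
    ∀ e : ℕ, 1 ≤ e →
      ∑ i ∈ Finset.range (e * d), dig i * p ^ i = l * ∑ j ∈ Finset.range e, p ^ (d * j) := by
  intro e he
  have hp1 : 1 < p := hp.1.one_lt
  set n := e * d with hn
  set S : ℕ := ∑ i ∈ Finset.range n, dig i * p ^ i with hS
  set R : ℕ := l * ∑ j ∈ Finset.range e, p ^ (d * j) with hR
  -- p^d - 1 is a unit in ℤ_[p]
  have hunit : IsUnit ((p : ℤ_[p]) ^ d - 1) := by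
    rw [PadicInt.isUnit_iff]
    have h1 : ‖((p : ℤ_[p]) ^ d)‖ < 1 := by
      rw [PadicInt.norm_lt_one_iff_dvd]
      exact dvd_pow_self _ (by omega)
    have : ‖(p : ℤ_[p]) ^ d - 1‖ = 1 := by
      rw [sub_eq_add_neg, PadicInt.norm_add_eq_max_of_ne (by rw [norm_neg, norm_one]; exact h1.ne)]
      rw [norm_neg, norm_one]
      exact max_eq_right h1.le
    exact this
  -- geometric sum identity in ℤ_[p]
  have hgeom : ((p : ℤ_[p]) ^ d - 1) * ∑ j ∈ Finset.range e, (p : ℤ_[p]) ^ (d * j)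
      = (p : ℤ_[p]) ^ n - 1 := by
    have := geom_sum_mul ((p : ℤ_[p]) ^ d) e
    calc ((p : ℤ_[p]) ^ d - 1) * ∑ j ∈ Finset.range e, (p : ℤ_[p]) ^ (d * j)
        = (∑ j ∈ Finset.range e, ((p : ℤ_[p]) ^ d) ^ j) * ((p : ℤ_[p]) ^ d - 1) := by
          rw [mul_comm]; congr 1; apply Finset.sum_congr rfl; intro j _; rw [← pow_mul]
      _ = ((p : ℤ_[p]) ^ d) ^ e - 1 := this
      _ = (p : ℤ_[p]) ^ n - 1 := by rw [← pow_mul, hn, mul_comm d e]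
  -- p^n divides γ - R in ℤ_[p]
  have hγR : ((p : ℤ_[p]) ^ n) ∣ (γ - (R : ℤ_[p])) := by
    have key : ((p : ℤ_[p]) ^ d - 1) * (γ - (R : ℤ_[p]))
        = (p : ℤ_[p]) ^ n * (-(l : ℤ_[p])) := by
      have hRcast : ((R : ℤ_[p])) = (l : ℤ_[p]) * ∑ j ∈ Finset.range e, (p : ℤ_[p]) ^ (d * j) := by
        rw [hR]; push_cast; ring
      rw [mul_sub, hγ, hRcast, ← mul_assoc, mul_comm ((p : ℤ_[p]) ^ d - 1) (l : ℤ_[p]),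
        mul_assoc, hgeom]
      ring
    obtain ⟨u, hu⟩ := hunit
    refine ⟨(↑u⁻¹ : ℤ_[p]) * (-(l : ℤ_[p])), ?_⟩
    have := congrArg (fun x => (↑u⁻¹ : ℤ_[p]) * x) key
    simp only [← hu, ← mul_assoc, Units.inv_mul, one_mul] at this
    rw [this]; ring
  -- p^n divides γ - S in ℤ_[p]
  have hγS : ((p : ℤ_[p]) ^ n) ∣ (γ - (S : ℤ_[p])) := by
    have := hdig n
    have hScast : ((S : ℤ_[p])) = ∑ i ∈ Finset.range n, (dig i : ℤ_[p]) * (p : ℤ_[p]) ^ i := by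
      rw [hS]; push_cast; ring
    rwa [← hScast] at this
  have hdvd : ((p : ℤ_[p]) ^ n) ∣ (((S : ℤ) - (R : ℤ) : ℤ) : ℤ_[p]) := by
    have : (((S : ℤ) - (R : ℤ) : ℤ) : ℤ_[p]) = (γ - (R : ℤ_[p])) - (γ - (S : ℤ_[p])) := by
      push_cast; ring
    rw [this]
    exact dvd_sub hγR hγS
  rw [PadicInt.pow_p_dvd_int_iff] at hdvd
  -- Bounds
  have hSlt : S < p ^ n := by
    rw [hS]
    clear_value S R
    clear hdvd hγS hγR hgeom hγ hdig
    induction n with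
    | zero => simp
    | succ m ih =>
      rw [Finset.sum_range_succ, pow_succ]
      have h1 : dig m * p ^ m ≤ (p - 1) * p ^ m :=
        Nat.mul_le_mul_right _ (Nat.le_sub_one_of_lt (hdig_lt m))
      have hx : 1 + (p - 1) = p := by omega
      have h2 : p ^ m + (p - 1) * p ^ m = p ^ m * p := by
        calc p ^ m + (p - 1) * p ^ m = p ^ m * (1 + (p - 1)) := by ring
          _ = p ^ m * p := by rw [hx]
      omega
  have hRlt : R < p ^ n := by
    have hgeomN : (p ^ d - 1) * ∑ j ∈ Finset.range e, p ^ (d * j) = p ^ n - 1 := by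
      have hcast : ((p : ℤ) ^ d - 1) * ∑ j ∈ Finset.range e, (p : ℤ) ^ (d * j)
          = (p : ℤ) ^ n - 1 := by
        have := geom_sum_mul ((p : ℤ) ^ d) e
        calc ((p : ℤ) ^ d - 1) * ∑ j ∈ Finset.range e, (p : ℤ) ^ (d * j)
            = (∑ j ∈ Finset.range e, ((p : ℤ) ^ d) ^ j) * ((p : ℤ) ^ d - 1) := by
              rw [mul_comm]; congr 1; apply Finset.sum_congr rfl; intro j _; rw [← pow_mul]
          _ = ((p : ℤ) ^ d) ^ e - 1 := this
          _ = (p : ℤ) ^ n - 1 := by rw [← pow_mul, hn, mul_comm d e]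
      have h1 : (1 : ℕ) ≤ p ^ d := Nat.one_le_pow _ _ (by omega)
      have h2 : (1 : ℕ) ≤ p ^ n := Nat.one_le_pow _ _ (by omega)
      have : ((((p ^ d - 1) * ∑ j ∈ Finset.range e, p ^ (d * j)) : ℕ) : ℤ)
          = (((p ^ n - 1 : ℕ)) : ℤ) := by
        push_cast [Nat.cast_sub h1, Nat.cast_sub h2]
        exact hcast
      exact_mod_cast this
    have : R ≤ (p ^ d - 1) * ∑ j ∈ Finset.range e, p ^ (d * j) :=
      Nat.mul_le_mul_right _ hl
    rw [hgeomN] at this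
    have h2 : (1 : ℕ) ≤ p ^ n := Nat.one_le_pow _ _ (by omega)
    omega
  -- conclude
  have habs : |((S : ℤ) - (R : ℤ))| < (p : ℤ) ^ n := by
    rw [abs_sub_lt_iff]
    constructor
    · have : (S : ℤ) < (p : ℤ) ^ n := by exact_mod_cast hSlt
      omega
    · have : (R : ℤ) < (p : ℤ) ^ n := by exact_mod_cast hRlt
      omega
  have : (S : ℤ) - (R : ℤ) = 0 := by
    by_contra hne
    have hpos : 0 < |((S : ℤ) - (R : ℤ))| := abs_pos.mpr hne
    have := Int.le_of_dvd hpos ((dvd_abs _ _).mpr hdvd)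
    omega
  exact_mod_cast sub_eq_zero.mp this
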